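/- Let r ≥ 1, let m₁, …, m_r be nonnegative integers with parities ν_i ∈ {0,1}, ν_i ≡ m_i (mod 2), set M = m₁+⋯+m_r and N = ν₁+⋯+ν_r, let β > 0, and let s be a nonnegative integer with s + N even. Then ∫_{-∞}^{∞} x^{s} e^{-βx²} H_{m₁}(x) ⋯ H_{m_r}(x) dx = √π · β^{-(N+s+1)/2} · (-1)^{(M-N)/2} (∏_{i=1}^{r} m_i!) / (∏_{i=1}^{r} (1/2)_{(m_i+ν_i)/2}) · (1/2)_{(s+N)/2} · ∏_{i=1}^{r} C((m_i+ν_i−1)/2, (m_i−ν_i)/2) · F_A^{(r)}((s+N+1)/2; -(m₁−ν₁)/2, …, -(m_r−ν_r)/2; ν₁+1/2, …, ν_r+1/2; 1/β, …, 1/β). -/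

import Mathlib

open MeasureTheory Finset Real

/-- Pochhammer symbol `(a)_k = a (a+1) ⋯ (a+k-1)`. -/
noncomputable def poch (a : ℝ) (k : ℕ) : ℝ := ∏ i ∈ Finset.range k, (a + i)

/-- Generalized binomial coefficient `C(a, j) = (a-j+1)_j / j!`. -/
noncomputable def gbinom (a : ℝ) (j : ℕ) : ℝ := poch (a - j + 1) j / (j.factorial : ℝ)

/-- Generalized Laguerre polynomial `L_n^{(α)}`. -/
noncomputable def Lag (α : ℝ) (n : ℕ) (x : ℝ) : ℝ :=
  ∑ i ∈ Finset.range (n + 1),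
    ((-1 : ℝ) ^ i / (i.factorial : ℝ)) * gbinom ((n : ℝ) + α) (n - i) * x ^ i

/-- Physicists' Hermite polynomial `H_n`. -/
noncomputable def Herm (n : ℕ) (x : ℝ) : ℝ :=
  ∑ k ∈ Finset.range (n / 2 + 1),
    ((-1 : ℝ) ^ k * (n.factorial : ℝ) / ((k.factorial : ℝ) * ((n - 2 * k).factorial : ℝ))) *
      (2 * x) ^ (n - 2 * k)

/-- Jacobi polynomial `P_n^{(α,γ)}`. -/
noncomputable def Jac (α γ : ℝ) (n : ℕ) (x : ℝ) : ℝ :=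
  ∑ k ∈ Finset.range (n + 1),
    gbinom ((n : ℝ) + α) (n - k) * gbinom ((n : ℝ) + γ) k *
      ((x - 1) / 2) ^ k * ((x + 1) / 2) ^ (n - k)

/-- Terminating Lauricella function of type A. -/
noncomputable def lauricellaA {r : ℕ} (a : ℝ) (m : Fin r → ℕ) (c x : Fin r → ℝ) : ℝ :=
  ∑ j ∈ Fintype.piFinset (fun i => Finset.range (m i + 1)),
    poch a (∑ i, j i) *
      ∏ i, (poch (-(m i : ℝ)) (j i) / (poch (c i) (j i) * ((j i).factorial : ℝ)) * x i ^ (j i))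

/-- Terminating Gauss hypergeometric sum `₂F₁(-k, b; c; x)`. -/
noncomputable def hyp2F1 (k : ℕ) (b c x : ℝ) : ℝ :=
  ∑ j ∈ Finset.range (k + 1),
    poch (-(k : ℝ)) j * poch b j / (poch c j * (j.factorial : ℝ)) * x ^ j

/-- Terminating hypergeometric sum `₃F₂(-k, b₁, b₂; c₁, c₂; x)`. -/
noncomputable def hyp3F2 (k : ℕ) (b₁ b₂ c₁ c₂ x : ℝ) : ℝ :=
  ∑ j ∈ Finset.range (k + 1),
    poch (-(k : ℝ)) j * poch b₁ j * poch b₂ j /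
      (poch c₁ j * poch c₂ j * (j.factorial : ℝ)) * x ^ j

/-- Gauss hypergeometric series `₂F₁(a, b; c; x)` (a terminating series when `a` or `b`
is a nonpositive integer). -/
noncomputable def hypSum (a b c x : ℝ) : ℝ :=
  ∑' j : ℕ, poch a j * poch b j / (poch c j * (j.factorial : ℝ)) * x ^ j

/-- Terminating Appell function `F₂(a; -m₁, -m₂; c₁, c₂; x₁, x₂)`. -/
noncomputable def appellF2 (a : ℝ) (m₁ m₂ : ℕ) (c₁ c₂ x₁ x₂ : ℝ) : ℝ :=
  ∑ j₁ ∈ Finset.range (m₁ + 1), ∑ j₂ ∈ Finset.range (m₂ + 1),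
    poch a (j₁ + j₂) * poch (-(m₁ : ℝ)) j₁ * poch (-(m₂ : ℝ)) j₂ /
      (poch c₁ j₁ * poch c₂ j₂ * (j₁.factorial : ℝ) * (j₂.factorial : ℝ)) * x₁ ^ j₁ * x₂ ^ j₂

/-- `1/z!` with the convention that it vanishes for negative integers `z`. -/
noncomputable def invFacZ (z : ℤ) : ℝ := if 0 ≤ z then ((z.toNat.factorial : ℕ) : ℝ)⁻¹ else 0

/-- Pochhammer symbol extended to integer index via `(a)_k = Γ(a+k)/Γ(a)` for negative `k`. -/
noncomputable def pochZ (a : ℝ) (k : ℤ) : ℝ :=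
  if 0 ≤ k then poch a k.toNat else Real.Gamma (a + (k : ℝ)) / Real.Gamma a


/-! ### Auxiliary lemmas -/

lemma poch_pos {a : ℝ} (ha : 0 < a) (n : ℕ) : 0 < poch a n :=
  Finset.prod_pos fun i _ => by positivity

lemma poch_add' (a : ℝ) (p q : ℕ) : poch a (p + q) = poch a p * poch (a + p) q := by
  unfold poch
  rw [Finset.prod_range_add]
  congr 1
  exact Finset.prod_congr rfl fun i _ => by push_cast; ring

lemma poch_succ (a : ℝ) (k : ℕ) : poch a (k + 1) = poch a k * (a + k) := by
  unfold poch; rw [Finset.prod_range_succ]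

lemma poch_neg (μ t : ℕ) (h : t ≤ μ) :
    poch (-(μ : ℝ)) t = (-1) ^ t * (μ.factorial : ℝ) / ((μ - t).factorial : ℝ) := by
  induction t with
  | zero =>
    simp only [poch, Finset.range_zero, Finset.prod_empty, pow_zero, Nat.sub_zero, one_mul]
    rw [eq_div_iff (by exact_mod_cast Nat.factorial_ne_zero μ)]; ring
  | succ t ih =>
    have ht : t ≤ μ := Nat.le_of_succ_le h
    have h1 : μ - t = (μ - (t + 1)) + 1 := by omega
    have h3 : ((μ - (t + 1)).factorial : ℝ) ≠ 0 := Nat.cast_ne_zero.2 (Nat.factorial_ne_zero _)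
    have h3' : ((μ - t).factorial : ℝ) ≠ 0 := Nat.cast_ne_zero.2 (Nat.factorial_ne_zero _)
    rw [poch_succ, ih ht, div_mul_eq_mul_div, div_eq_div_iff h3' h3]
    rw [h1, Nat.factorial_succ]
    push_cast [Nat.cast_sub (show t + 1 ≤ μ from h)]
    ring

lemma dup0 (t : ℕ) : ((2 * t).factorial : ℝ) = 2 ^ (2 * t) * poch (1/2) t * (t.factorial : ℝ) := by
  induction t with
  | zero => simp [poch]
  | succ t ih =>
    have h1 : 2 * (t + 1) = (2 * t + 1) + 1 := by ring
    rw [h1, Nat.factorial_succ, Nat.factorial_succ, Nat.factorial_succ, poch_succ]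
    push_cast
    rw [ih]
    ring

lemma dup1 (t : ℕ) :
    ((2 * t + 1).factorial : ℝ) = 2 ^ (2 * t + 1) * poch (1/2) (t + 1) * (t.factorial : ℝ) := by
  rw [Nat.factorial_succ, poch_succ]
  push_cast
  rw [dup0]
  ring

lemma dup (t ν : ℕ) (hν : ν ≤ 1) :
    ((2 * t + ν).factorial : ℝ) = 2 ^ (2 * t + ν) * poch (1/2) (t + ν) * (t.factorial : ℝ) := by
  interval_cases ν
  · simpa using dup0 t
  · exact dup1 t

lemma gamma_half (n : ℕ) : Real.Gamma ((n : ℝ) + 1/2) = poch (1/2) n * Real.sqrt π := by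
  induction n with
  | zero => simpa [poch, one_div] using Real.Gamma_one_half_eq
  | succ n ih =>
    have h1 : ((n + 1 : ℕ) : ℝ) + 1/2 = ((n : ℝ) + 1/2) + 1 := by push_cast; ring
    rw [h1, Real.Gamma_add_one (by positivity), ih, poch_succ]
    ring

lemma integrable_pow_exp {b : ℝ} (hb : 0 < b) (n : ℕ) :
    Integrable fun x : ℝ => x ^ n * Real.exp (-b * x ^ 2) := by
  have h := integrable_rpow_mul_exp_neg_mul_sq hb (s := (n : ℝ))
    (lt_of_lt_of_le neg_one_lt_zero (Nat.cast_nonneg n))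
  simpa [Real.rpow_natCast] using h

lemma moment_aux {b : ℝ} (hb : 0 < b) (n : ℕ) :
    ∫ x : ℝ, x ^ (2 * n) * Real.exp (-b * x ^ 2) =
      Real.Gamma ((n : ℝ) + 1/2) * b ^ (-((n : ℝ) + 1/2)) := by
  set f : ℝ → ℝ := fun x => x ^ (2 * n) * Real.exp (-b * x ^ 2) with hf
  have hint := integrable_pow_exp hb (2 * n)
  have heven : ∀ x : ℝ, f (-x) = f x := by
    intro x
    simp [hf, Even.neg_pow (even_two_mul n), neg_sq]
  have hsplit : (∫ x in Set.Iic (0:ℝ), f x) + ∫ x in Set.Ioi (0:ℝ), f x = ∫ x : ℝ, f x :=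
    intervalIntegral.integral_Iic_add_Ioi hint.integrableOn hint.integrableOn
  have hneg : (∫ x in Set.Iic (0:ℝ), f x) = ∫ x in Set.Ioi (0:ℝ), f x := by
    rw [show Set.Iic (0:ℝ) = Set.Iic (-0) by norm_num, ← integral_comp_neg_Ioi]
    exact setIntegral_congr_fun measurableSet_Ioi fun x _ => heven x
  have htwo : ∫ x : ℝ, f x = 2 * ∫ x in Set.Ioi (0:ℝ), f x := by
    rw [← hsplit, hneg]; ring
  have hsub : (∫ x in Set.Ioi (0:ℝ), (2 * x ^ ((2:ℝ) - 1)) •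
      ((x ^ (2:ℝ)) ^ ((n:ℝ) + 1/2 - 1) * Real.exp (-(b * x ^ (2:ℝ))))) =
      ∫ y in Set.Ioi (0:ℝ), y ^ ((n:ℝ) + 1/2 - 1) * Real.exp (-(b * y)) :=
    integral_comp_rpow_Ioi_of_pos (g := fun y => y ^ ((n:ℝ) + 1/2 - 1) * Real.exp (-(b * y)))
      zero_lt_two
  have hpt : ∀ x ∈ Set.Ioi (0:ℝ), (2 * x ^ ((2:ℝ) - 1)) •
      ((x ^ (2:ℝ)) ^ ((n:ℝ) + 1/2 - 1) * Real.exp (-(b * x ^ (2:ℝ)))) = 2 * f x := by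
    intro x hx
    have hx0 : 0 < x := hx
    have h2 : x ^ (2:ℝ) = x ^ (2:ℕ) := by
      rw [← Real.rpow_natCast x 2]; norm_num
    have h3 : (x ^ (2:ℕ)) ^ ((n:ℝ) + 1/2 - 1) = x ^ (2 * ((n:ℝ) + 1/2 - 1)) := by
      rw [← Real.rpow_natCast x 2, ← Real.rpow_mul hx0.le]; norm_num
    have h4 : x ^ ((2:ℝ) - 1) * x ^ (2 * ((n:ℝ) + 1/2 - 1)) = x ^ (2 * n) := by
      rw [← Real.rpow_add hx0, ← Real.rpow_natCast x (2*n)]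
      congr 1
      push_cast; ring
    rw [h2, h3, smul_eq_mul, hf]
    dsimp only
    rw [← h4, ← h2]
    ring
  have hGamma : (∫ y in Set.Ioi (0:ℝ), y ^ ((n:ℝ) + 1/2 - 1) * Real.exp (-(b * y))) =
      (1/b) ^ ((n:ℝ) + 1/2) * Real.Gamma ((n:ℝ) + 1/2) :=
    integral_rpow_mul_exp_neg_mul_Ioi (by positivity) hb
  have hfin : 2 * ∫ x in Set.Ioi (0:ℝ), f x
      = (1/b) ^ ((n:ℝ) + 1/2) * Real.Gamma ((n:ℝ) + 1/2) := by
    rw [← hGamma, ← hsub, ← integral_const_mul]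
    exact (setIntegral_congr_fun measurableSet_Ioi hpt).symm
  rw [htwo, hfin, one_div, Real.inv_rpow hb.le, ← Real.rpow_neg hb.le]
  ring

lemma per_i (mu nu k : ℕ) (hnu : nu ≤ 1) (hk : k ≤ mu) :
    ((-1:ℝ) ^ k * ((2*mu+nu).factorial : ℝ) /
        ((k.factorial : ℝ) * (((2*mu+nu) - 2*k).factorial : ℝ))) * 2 ^ ((2*mu+nu) - 2*k)
    = ((-1:ℝ) ^ mu * ((2*mu+nu).factorial : ℝ) / poch (1/2) (mu + nu)) *
      gbinom (((((2*mu+nu : ℕ)) : ℝ) + (nu : ℝ) - 1) / 2) mu *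
      (poch (-(mu:ℝ)) (mu - k) / (poch ((nu:ℝ) + 1/2) (mu - k) * (((mu - k).factorial : ℝ)))) := by
  set t := mu - k with htdef
  have hmu : mu = t + k := by omega
  have hsub : 2*mu+nu - 2*k = 2*t+nu := by omega
  have key : ((-1:ℝ)) ^ mu * ((-1:ℝ)) ^ t = (-1) ^ k := by
    rw [hmu, pow_add, mul_right_comm, ← mul_pow]; norm_num
  unfold gbinom
  have hg : (((2*mu+nu:ℕ):ℝ) + (nu:ℝ) - 1)/2 - (mu:ℕ) + 1 = (nu:ℝ) + 1/2 := by push_cast; ring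
  rw [hg, hsub, dup t nu hnu, poch_neg mu t (by omega)]
  have hq : poch ((nu:ℝ) + 1/2) mu = poch ((nu:ℝ)+1/2) t * poch ((nu:ℝ)+1/2+t) k := by
    conv_lhs => rw [hmu]
    rw [poch_add']
  rw [hq]
  have hp1 : poch (1/2 : ℝ) (mu + nu) = poch (1/2) (t+nu) * poch ((1:ℝ)/2 + ((t+nu : ℕ):ℝ)) k := by
    have h5 : mu + nu = (t+nu) + k := by omega
    rw [h5, poch_add']
  rw [hp1]
  have hqq : poch ((1:ℝ)/2 + ((t+nu:ℕ):ℝ)) k = poch ((nu:ℝ)+1/2+(t:ℕ)) k := by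
    congr 1; push_cast; ring
  rw [hqq, ← key]
  have hmusub : mu - t = k := by omega
  rw [hmusub]
  have pos0 : (0:ℝ) < poch ((nu:ℝ)+1/2) t := poch_pos (by positivity) _
  have pos1 : (0:ℝ) < poch (1/2) (t+nu) := poch_pos (by norm_num) _
  have pos2 : (0:ℝ) < poch ((nu:ℝ)+1/2+(t:ℕ)) k := poch_pos (by positivity) _
  have f1 : (0:ℝ) < (k.factorial:ℝ) := by exact_mod_cast k.factorial_pos
  have f2 : (0:ℝ) < (t.factorial:ℝ) := by exact_mod_cast t.factorial_pos
  have f3 : (0:ℝ) < (mu.factorial:ℝ) := by exact_mod_cast mu.factorial_pos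
  rw [div_div, div_mul_div_comm, div_mul_div_comm, div_mul_eq_mul_div,
    div_eq_div_iff (by positivity) (by positivity)]
  ring

/-- generalized Krein-like functional of Hermite polynomials. -/
theorem hermite_krein_r_functional (r : ℕ) (hr : 1 ≤ r) (m ν : Fin r → ℕ)
    (hν : ∀ i, ν i = m i % 2) (β : ℝ) (hβ : 0 < β) (s : ℕ)
    (hpar : Even (s + ∑ i, ν i)) :
    ∫ x : ℝ, x ^ s * Real.exp (-β * x ^ 2) * ∏ i, Herm (m i) x =
      Real.sqrt π * β ^ (-(((∑ i, ν i : ℕ) : ℝ) + (s : ℝ) + 1) / 2) *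
        ((-1 : ℝ) ^ (((∑ i, m i) - ∑ i, ν i) / 2) *
          (∏ i, ((m i).factorial : ℝ)) / ∏ i, poch (1 / 2) ((m i + ν i) / 2)) *
        poch (1 / 2) ((s + ∑ i, ν i) / 2) *
        (∏ i, gbinom (((m i : ℝ) + (ν i : ℝ) - 1) / 2) ((m i - ν i) / 2)) *
        lauricellaA ((((s + ∑ i, ν i : ℕ) : ℝ) + 1) / 2) (fun i => (m i - ν i) / 2)
          (fun i => (ν i : ℝ) + 1 / 2) (fun _ => 1 / β) := by
  classical
  have hnu1 : ∀ i, ν i ≤ 1 := fun i => by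
    rw [hν i]; omega
  set μ : Fin r → ℕ := fun i => m i / 2 with hμdef
  have hμi : ∀ i, m i / 2 = μ i := fun i => rfl
  have hm : ∀ i, m i = 2 * μ i + ν i := fun i => by
    have h := hν i
    simp only [hμdef]
    omega
  obtain ⟨p0, hp0⟩ := hpar
  have hp2 : s + ∑ i, ν i = 2 * ((s + ∑ i, ν i) / 2) := by omega
  set p := (s + ∑ i, ν i) / 2 with hpdef
  have hνμ : ∀ i, (m i - ν i) / 2 = μ i := fun i => by have h1 := hm i; have h2 := hnu1 i; omega
  have hνμ' : ∀ i, (m i + ν i) / 2 = μ i + ν i := fun i => by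
    have h1 := hm i; have h2 := hnu1 i; omega
  have hMN : (∑ i, m i - ∑ i, ν i) / 2 = ∑ i, μ i := by
    have h1 : ∑ i, m i = 2 * ∑ i, μ i + ∑ i, ν i := by
      rw [Finset.mul_sum, ← Finset.sum_add_distrib]
      exact Finset.sum_congr rfl fun i _ => hm i
    omega
  set K := Fintype.piFinset (fun i : Fin r => Finset.range (μ i + 1)) with hKdef
  set c : Fin r → ℕ → ℝ := fun i k =>
    (-1:ℝ) ^ k * ((m i).factorial : ℝ) /
      ((k.factorial : ℝ) * ((m i - 2 * k).factorial : ℝ)) with hcdef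
  have hHerm : ∀ x : ℝ, (∏ i, Herm (m i) x)
      = ∑ k ∈ K, (∏ i, c i (k i)) * (2 * x) ^ (∑ i, (m i - 2 * k i)) := by
    intro x
    unfold Herm
    simp only [hμi]
    rw [Finset.prod_univ_sum]
    exact Finset.sum_congr rfl fun k _ => by
      rw [Finset.prod_mul_distrib, Finset.prod_pow_eq_pow_sum]
  have hki : ∀ k ∈ K, ∀ i, k i ≤ μ i := by
    intro k hk i
    have h := Fintype.mem_piFinset.1 hk i
    simpa [Nat.lt_succ_iff] using h
  have hexp : ∀ k ∈ K, s + ∑ i, (m i - 2 * k i) = 2 * (p + ∑ i, (μ i - k i)) := by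
    intro k hk
    have h1 : ∑ i, (m i - 2 * k i) = ∑ i, (2 * (μ i - k i) + ν i) :=
      Finset.sum_congr rfl fun i _ => by have h2 := hm i; have h3 := hki k hk i; omega
    have h2 : ∑ i, (2 * (μ i - k i) + ν i) = 2 * ∑ i, (μ i - k i) + ∑ i, ν i := by
      rw [Finset.mul_sum, ← Finset.sum_add_distrib]
    omega
  have hInt : (∫ x : ℝ, x ^ s * Real.exp (-β * x ^ 2) * ∏ i, Herm (m i) x)
      = ∑ k ∈ K, (∏ i, c i (k i)) * (2 ^ (∑ i, (m i - 2 * k i)) *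
          (Real.Gamma ((↑(p + ∑ i, (μ i - k i)) : ℝ) + 1/2) *
            β ^ (-((↑(p + ∑ i, (μ i - k i)) : ℝ) + 1/2)))) := by
    have hfun : (fun x : ℝ => x ^ s * Real.exp (-β * x ^ 2) * ∏ i, Herm (m i) x)
        = fun x : ℝ => ∑ k ∈ K, ((∏ i, c i (k i)) * 2 ^ (∑ i, (m i - 2 * k i))) *
            (x ^ (s + ∑ i, (m i - 2 * k i)) * Real.exp (-β * x ^ 2)) := by
      funext x
      rw [hHerm x, Finset.mul_sum]
      exact Finset.sum_congr rfl fun k _ => by rw [mul_pow, pow_add]; ring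
    rw [hfun, integral_finset_sum K (fun k _ => ((integrable_pow_exp hβ _).const_mul _))]
    refine Finset.sum_congr rfl fun k hk => ?_
    rw [integral_const_mul, hexp k hk, moment_aux hβ (p + ∑ i, (μ i - k i))]
    ring
  rw [hInt]
  unfold lauricellaA
  simp only [hνμ, hνμ', hMN]
  rw [← hKdef, Finset.mul_sum]
  refine Finset.sum_nbij' (i := fun k => fun i => μ i - k i) (j := fun k => fun i => μ i - k i)
    ?_ ?_ ?_ ?_ ?_
  · intro a ha
    rw [Fintype.mem_piFinset]
    intro i
    have h := hki a ha i
    simp only [Finset.mem_range]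
    omega
  · intro a ha
    rw [Fintype.mem_piFinset]
    intro i
    have h := Fintype.mem_piFinset.1 ha i
    simp only [Finset.mem_range] at h ⊢
    omega
  · intro a ha
    funext i
    show μ i - (μ i - a i) = a i
    have h := hki a ha i
    omega
  · intro a ha
    have h := Fintype.mem_piFinset.1 ha
    funext i
    show μ i - (μ i - a i) = a i
    have h2 := h i
    simp only [Finset.mem_range] at h2
    omega
  · intro k hk
    dsimp only
    have hkk := hki k hk
    have hbeta : β ^ (-((↑(p + ∑ i, (μ i - k i)) : ℝ) + 1/2))
        = β ^ (-(((∑ i, ν i : ℕ) : ℝ) + (s : ℝ) + 1) / 2) * (1/β) ^ (∑ i, (μ i - k i)) := by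
      have h2p : (s : ℝ) + ((∑ i, ν i : ℕ) : ℝ) = 2 * (p : ℝ) := by
        exact_mod_cast congrArg (Nat.cast (R := ℝ)) hp2
      rw [show -((↑(p + ∑ i, (μ i - k i)) : ℝ) + 1/2)
            = (-(((∑ i, ν i : ℕ) : ℝ) + (s : ℝ) + 1) / 2) + (-((∑ i, (μ i - k i) : ℕ) : ℝ)) by
          push_cast at h2p ⊢; linarith]
      rw [Real.rpow_add hβ, Real.rpow_neg hβ.le, Real.rpow_natCast, one_div, inv_pow]
    have ha2 : (((s + ∑ i, ν i : ℕ) : ℝ) + 1) / 2 = 1/2 + (p : ℝ) := by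
      have h2p : (s : ℝ) + ((∑ i, ν i : ℕ) : ℝ) = 2 * (p : ℝ) := by
        exact_mod_cast congrArg (Nat.cast (R := ℝ)) hp2
      push_cast at h2p ⊢
      linarith
    have hP : (∏ i, c i (k i)) * 2 ^ (∑ i, (m i - 2 * k i))
        = ((-1:ℝ) ^ (∑ i, μ i) * ∏ i, ((m i).factorial : ℝ)) /
            (∏ i, poch (1/2) (μ i + ν i)) *
          (∏ i, gbinom (((m i : ℝ) + (ν i : ℝ) - 1) / 2) (μ i)) *
          (∏ i, (poch (-((μ i : ℕ) : ℝ)) (μ i - k i) /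
            (poch ((ν i : ℝ) + 1/2) (μ i - k i) * ((μ i - k i).factorial : ℝ)))) := by
      rw [← Finset.prod_pow_eq_pow_sum, ← Finset.prod_mul_distrib]
      rw [show ((-1:ℝ) ^ (∑ i, μ i) * ∏ i, ((m i).factorial : ℝ)) /
            (∏ i, poch (1/2) (μ i + ν i))
          = ∏ i, ((-1:ℝ) ^ (μ i) * ((m i).factorial : ℝ) / poch (1/2) (μ i + ν i)) by
        rw [Finset.prod_div_distrib, Finset.prod_mul_distrib, Finset.prod_pow_eq_pow_sum]]
      rw [← Finset.prod_mul_distrib, ← Finset.prod_mul_distrib]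
      refine Finset.prod_congr rfl fun i _ => ?_
      simp only [hcdef]
      rw [hm i]
      exact per_i (μ i) (ν i) (k i) (hnu1 i) (by have := hkk i; omega)
    rw [gamma_half (p + ∑ i, (μ i - k i)), poch_add' (1/2) p (∑ i, (μ i - k i)), hbeta, ha2]
    rw [Finset.prod_mul_distrib, Finset.prod_pow_eq_pow_sum]
    linear_combination hP * (Real.sqrt π * poch (1/2) p *
      poch (1/2 + (p:ℝ)) (∑ i, (μ i - k i)) *
      (β ^ (-(((∑ i, ν i : ℕ) : ℝ) + (s : ℝ) + 1) / 2) * (1/β) ^ (∑ i, (μ i - k i))))
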